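/- Let R > 1, 0 ≤ v < 1, C > 0 and β > 0; set m̄⁰ = tanh(−β·C/2), γ₁ = ((1+m̄⁰)·v + 3·(1−m̄⁰))/(2R), γ₂ = −(1−m̄⁰)/R. Then: (1) if R ≥ 2, every complex root of z² − γ₁·z − γ₂ has modulus strictly less than 1, for every β > 0; (2) if R < 2, every complex root of z² − γ₁·z − γ₂ has modulus strictly less than 1 if and only if β < β_NS := (1/C)·log(R/(2−R)), and at β = β_NS the two roots are non-real complex conjugates of modulus exactly 1. -/

import Mathlib

private lemma tanh_formula (x : ℝ) :
    Real.tanh x = (Real.exp (2*x) - 1) / (Real.exp (2*x) + 1) := by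
  have h : Real.exp (2*x) = Real.exp x * Real.exp x := by
    rw [← Real.exp_add]; ring_nf
  have hx : (0:ℝ) < Real.exp x := Real.exp_pos x
  have hnx : Real.exp (-x) * Real.exp x = 1 := by
    rw [← Real.exp_add]; simp
  rw [Real.tanh_eq_sinh_div_cosh, Real.sinh_eq, Real.cosh_eq, h]
  have hden : (0:ℝ) < Real.exp x + Real.exp (-x) := by positivity
  have hden2 : (0:ℝ) < Real.exp x * Real.exp x + 1 := by positivity
  field_simp
  nlinarith [hnx, hx, Real.exp_pos (-x)]

private lemma quad_factor (a b : ℝ) (z₁ z₂ : ℂ) (hs : z₁ + z₂ = (a:ℂ))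
    (hp : z₁ * z₂ = -(b:ℂ)) (z : ℂ) :
    z ^ 2 - (a:ℂ) * z - (b:ℂ) = 0 ↔ (z = z₁ ∨ z = z₂) := by
  have key : z ^ 2 - (a:ℂ)*z - (b:ℂ) = (z - z₁) * (z - z₂) := by
    linear_combination z*hs - hp
  rw [key, mul_eq_zero, sub_eq_zero, sub_eq_zero]

private lemma quad_roots_lt_one (a b : ℝ) :
    (∀ z : ℂ, z ^ 2 - (a:ℂ) * z - (b:ℂ) = 0 → ‖z‖ < 1) ↔
      (|b| < 1 ∧ |a| < 1 - b) := by
  rcases le_or_gt 0 (a^2 + 4*b) with hd | hd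
  · -- real roots
    set s := Real.sqrt (a^2+4*b) with hsdef
    have hs2 : s^2 = a^2+4*b := Real.sq_sqrt hd
    have hs0 : (0:ℝ) ≤ s := Real.sqrt_nonneg _
    have hr1 : (a+s)/2 + (a-s)/2 = a := by ring
    have hr2 : ((a+s)/2) * ((a-s)/2) = -b := by linear_combination (-1/4)*hs2
    have hfac := quad_factor a b ((a+s)/2 : ℝ) ((a-s)/2 : ℝ)
      (by rw [← Complex.ofReal_add, hr1]) (by rw [← Complex.ofReal_mul, hr2, Complex.ofReal_neg])
    constructor
    · intro h
      have h1 : |(a+s)/2| < 1 := by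
        have := h (((a+s)/2 : ℝ) : ℂ) ((hfac _).mpr (Or.inl rfl))
        rwa [Complex.norm_real, Real.norm_eq_abs] at this
      have h2 : |(a-s)/2| < 1 := by
        have := h (((a-s)/2 : ℝ) : ℂ) ((hfac _).mpr (Or.inr rfl))
        rwa [Complex.norm_real, Real.norm_eq_abs] at this
      rw [abs_lt] at h1 h2
      constructor
      · rw [abs_lt]
        constructor <;> nlinarith [h1.1, h1.2, h2.1, h2.2]
      · rw [abs_lt]
        constructor <;> nlinarith [mul_pos (by linarith [h1.2] : (0:ℝ) < 1 - (a+s)/2)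
            (by linarith [h2.2] : (0:ℝ) < 1 - (a-s)/2),
          mul_pos (by linarith [h1.1] : (0:ℝ) < 1 + (a+s)/2)
            (by linarith [h2.1] : (0:ℝ) < 1 + (a-s)/2)]
    · rintro ⟨hb, ha⟩
      rw [abs_lt] at hb ha
      have hlt1 : a^2+4*b < (2-a)^2 := by nlinarith
      have hlt2 : a^2+4*b < (2+a)^2 := by nlinarith
      have hsa1 : s < 2 - a := by
        calc s < Real.sqrt ((2-a)^2) := Real.sqrt_lt_sqrt hd hlt1
        _ = 2 - a := Real.sqrt_sq (by linarith)
      have hsa2 : s < 2 + a := by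
        calc s < Real.sqrt ((2+a)^2) := Real.sqrt_lt_sqrt hd hlt2
        _ = 2 + a := Real.sqrt_sq (by linarith)
      intro z hz
      rcases (hfac z).mp hz with h | h <;> subst h <;>
        rw [Complex.norm_real, Real.norm_eq_abs, abs_lt] <;> constructor <;> linarith
  · -- complex conjugate roots
    set y := Real.sqrt (-(a^2+4*b))/2 with hydef
    have hyn : (0:ℝ) < -(a^2+4*b) := by linarith
    have hy0 : 0 < y := by
      rw [hydef]; positivity
    have hy2 : y^2 = -(a^2+4*b)/4 := by
      rw [hydef, div_pow, Real.sq_sqrt hyn.le]; ring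
    set z₀ : ℂ := (↑(a/2) + ↑y * Complex.I) with hz₀
    have hre : z₀.re = a/2 := by simp [hz₀]
    have hns : Complex.normSq z₀ = -b := by
      rw [hz₀, Complex.normSq_add_mul_I]; nlinarith [hy2]
    have hsum : z₀ + (starRingEnd ℂ) z₀ = (a:ℂ) := by
      rw [Complex.add_conj, hre]; push_cast; ring
    have hprod : z₀ * (starRingEnd ℂ) z₀ = -(b:ℂ) := by
      rw [Complex.mul_conj, hns]; push_cast; ring
    have hfac := quad_factor a b z₀ ((starRingEnd ℂ) z₀) hsum hprod
    have habs2 : (‖z₀‖)^2 = -b := by rw [Complex.sq_norm]; exact hns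
    have hb0 : b < 0 := by nlinarith [Complex.normSq_add_mul_I (a/2) y, hns, hy0, sq_nonneg (a/2)]
    constructor
    · intro h
      have hA : ‖z₀‖ < 1 := h z₀ ((hfac _).mpr (Or.inl rfl))
      have hA0 : 0 ≤ ‖z₀‖ := norm_nonneg _
      constructor
      · rw [abs_lt]; constructor <;> nlinarith
      · have hxlt : |a/2| < ‖z₀‖ := by
          have h1 : (a/2)^2 < (‖z₀‖)^2 := by nlinarith [hns, Complex.normSq_add_mul_I (a/2) y]
          have := abs_nonneg (a/2)
          nlinarith [sq_abs (a/2)]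
        rw [abs_lt] at hxlt ⊢
        constructor <;> nlinarith [sq_nonneg (‖z₀‖ - 1)]
    · rintro ⟨hb, _⟩
      rw [abs_lt] at hb
      have hA : ‖z₀‖ < 1 := by
        nlinarith [norm_nonneg z₀]
      intro z hz
      rcases (hfac z).mp hz with h | h <;> subst h
      · exact hA
      · rwa [Complex.norm_conj]


/-- Lemma 5 of the paper (fundamentalists vs ROC traders, L = 2): with
`γ₁(β) = ((1+m̄⁰)v + 3(1-m̄⁰))/(2R)`, `γ₂(β) = -(1-m̄⁰)/R`,
`m̄⁰ = tanh(-βC/2)`: (1) if `R ≥ 2` every complex root of `z² - γ₁z - γ₂` has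
modulus < 1 for every `β > 0`; (2) if `R < 2` this holds iff
`β < β_NS = (1/C) log(R/(2-R))`, and at `β = β_NS` the two roots are non-real
complex conjugates of modulus 1. -/
theorem ared_roc_fundamental_stability
    (R v C : ℝ) (hR : 1 < R) (hv0 : 0 ≤ v) (hv1 : v < 1) (hC : 0 < C)
    (mb γ1 γ2 : ℝ → ℝ)
    (hmb : ∀ β, mb β = Real.tanh (-β * C / 2))
    (hγ1 : ∀ β, γ1 β = ((1 + mb β) * v + 3 * (1 - mb β)) / (2 * R))
    (hγ2 : ∀ β, γ2 β = -(1 - mb β) / R)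
    (βNS : ℝ) (hβNS : βNS = (1 / C) * Real.log (R / (2 - R))) :
    (2 ≤ R → ∀ β : ℝ, 0 < β →
      ∀ z : ℂ, z ^ 2 - (γ1 β : ℂ) * z - (γ2 β : ℂ) = 0 →
        ‖z‖ < 1) ∧
    (R < 2 →
      (∀ β : ℝ, 0 < β →
        ((∀ z : ℂ, z ^ 2 - (γ1 β : ℂ) * z - (γ2 β : ℂ) = 0 →
            ‖z‖ < 1) ↔ β < βNS)) ∧
      ∃ z : ℂ, z.im ≠ 0 ∧ ‖z‖ = 1 ∧
        ∀ w : ℂ, (w ^ 2 - (γ1 βNS : ℂ) * w - (γ2 βNS : ℂ) = 0 ↔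
          (w = z ∨ w = starRingEnd ℂ z))) := by
  have hR0 : (0:ℝ) < R := by linarith
  -- closed form for mb
  have hm : ∀ β : ℝ, mb β = (Real.exp (-(β*C)) - 1)/(Real.exp (-(β*C)) + 1) := by
    intro β
    rw [hmb β, tanh_formula]
    have : 2 * (-β * C / 2) = -(β*C) := by ring
    rw [this]
  have hmlt : ∀ β : ℝ, -1 < mb β ∧ mb β < 1 := by
    intro β
    have hE : (0:ℝ) < Real.exp (-(β*C)) := Real.exp_pos _
    rw [hm β]
    constructor
    · rw [lt_div_iff₀ (by linarith)]; linarith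
    · rw [div_lt_iff₀ (by linarith)]; linarith
  -- stability criterion
  have crit : ∀ β : ℝ, (∀ z : ℂ, z ^ 2 - (γ1 β : ℂ) * z - (γ2 β : ℂ) = 0 →
      ‖z‖ < 1) ↔ (1 - mb β < R) := by
    intro β
    obtain ⟨hm1, hm2⟩ := hmlt β
    have hg2 : γ2 β = -((1 - mb β)/R) := by rw [hγ2 β]; ring
    have hdpos : 0 < (1 - mb β)/R := div_pos (by linarith) hR0
    rw [quad_roots_lt_one]
    constructor
    · rintro ⟨h1, _⟩
      rw [hg2, abs_neg, abs_of_pos hdpos, div_lt_one hR0] at h1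
      exact h1
    · intro hlt
      constructor
      · rw [hg2, abs_neg, abs_of_pos hdpos, div_lt_one hR0]; exact hlt
      · have hγ1nn : 0 ≤ γ1 β := by
          rw [hγ1 β]
          apply div_nonneg _ (by linarith)
          nlinarith [mul_nonneg (by linarith : (0:ℝ) ≤ 1 + mb β) hv0]
        rw [abs_of_nonneg hγ1nn, hγ1 β, hg2]
        have hrhs : 1 - -((1 - mb β)/R) = (2*R + 2*(1 - mb β))/(2*R) := by
          field_simp; ring
        rw [hrhs, div_lt_div_iff₀ (by linarith) (by linarith)]
        nlinarith [mul_lt_mul_of_pos_left hv1 (by linarith : (0:ℝ) < 1 + mb β)]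
  have crit2 : ∀ β : ℝ, (1 - mb β < R) ↔ (2 - R < R * Real.exp (-(β*C))) := by
    intro β
    have hE : (0:ℝ) < Real.exp (-(β*C)) := Real.exp_pos _
    rw [hm β]
    have hE1 : (0:ℝ) < Real.exp (-(β*C)) + 1 := by linarith
    rw [show (1:ℝ) - (Real.exp (-(β*C)) - 1)/(Real.exp (-(β*C)) + 1)
        = 2/(Real.exp (-(β*C)) + 1) from by field_simp; ring, div_lt_iff₀ hE1]
    constructor <;> intro h <;> nlinarith
  constructor
  · intro hR2 β _ z hz
    refine (crit β).mpr ((crit2 β).mpr ?_) z hz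
    have := Real.exp_pos (-(β*C))
    nlinarith
  · intro hR2
    have h2R : (0:ℝ) < 2 - R := by linarith
    have hq : (0:ℝ) < R/(2-R) := div_pos hR0 h2R
    have hCβ : C * βNS = Real.log (R/(2-R)) := by
      rw [hβNS]; field_simp
    have hlogeq : Real.log ((2-R)/R) = -(C * βNS) := by
      rw [show (2-R)/R = (R/(2-R))⁻¹ from by rw [inv_div], Real.log_inv, hCβ]
    have step : ∀ β : ℝ, (2 - R < R * Real.exp (-(β*C))) ↔ β < βNS := by
      intro β
      rw [show (2 - R < R * Real.exp (-(β*C))) ↔ Real.log ((2-R)/R) < -(β*C) from by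
        rw [Real.log_lt_iff_lt_exp (div_pos h2R hR0), div_lt_iff₀ hR0, mul_comm]]
      rw [hlogeq, neg_lt_neg_iff, mul_comm β C, mul_lt_mul_iff_right₀ hC]
    constructor
    · intro β _
      exact (crit β).trans ((crit2 β).trans (step β))
    · -- at βNS
      have hENS : Real.exp (-(βNS*C)) = (2-R)/R := by
        rw [show -(βNS*C) = Real.log ((2-R)/R) from by rw [hlogeq]; ring]
        exact Real.exp_log (div_pos h2R hR0)
      have hmNS : mb βNS = 1 - R := by
        rw [hm βNS, hENS]
        rw [div_eq_iff (by positivity : (2-R)/R + 1 ≠ 0)]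
        field_simp
        ring
      have hγ2NS : γ2 βNS = -1 := by
        rw [hγ2, hmNS]; field_simp; ring
      have hgNS : γ1 βNS = ((2-R)*v + 3*R)/(2*R) := by
        rw [hγ1, hmNS]; ring_nf
      have hgpos : 0 < γ1 βNS := by
        rw [hgNS]
        apply div_pos _ (by linarith)
        nlinarith [mul_nonneg h2R.le hv0]
      have hglt2 : γ1 βNS < 2 := by
        rw [hgNS, div_lt_iff₀ (by linarith)]
        nlinarith [mul_pos h2R (by linarith : (0:ℝ) < 1 - v)]
      have h4g : 0 < 4 - (γ1 βNS)^2 := by nlinarith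
      set y := Real.sqrt (4 - (γ1 βNS)^2)/2 with hydef
      have hy0 : 0 < y := by rw [hydef]; positivity
      have hy2 : y^2 = (4 - (γ1 βNS)^2)/4 := by
        rw [hydef, div_pow, Real.sq_sqrt h4g.le]; ring
      set z : ℂ := (↑(γ1 βNS/2) + ↑y * Complex.I) with hzdef
      have hre : z.re = γ1 βNS/2 := by simp [hzdef]
      have him : z.im = y := by simp [hzdef]
      have hns : Complex.normSq z = 1 := by
        rw [hzdef, Complex.normSq_add_mul_I]; nlinarith [hy2]
      have hsum : z + (starRingEnd ℂ) z = ((γ1 βNS : ℝ) : ℂ) := by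
        rw [Complex.add_conj, hre]; push_cast; ring
      have hprod : z * (starRingEnd ℂ) z = -((γ2 βNS : ℝ) : ℂ) := by
        rw [Complex.mul_conj, hns, hγ2NS]; push_cast; ring
      refine ⟨z, ?_, ?_, fun w => quad_factor (γ1 βNS) (γ2 βNS) z _ hsum hprod w⟩
      · rw [him]; exact ne_of_gt hy0
      · rw [Complex.norm_def, hns, Real.sqrt_one]
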